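/- One has S₂ = c·v₁, and consequently the square of the ideal 𝔞 = span{Q, τ} of O satisfies 𝔞² = span{Q², τ − Q·c·v₁}. -/

import Mathlib

open Polynomial

theorem stmt_8 (Δ : ℤ) (hΔ : Δ < 0) (P Q c u₁ v₁ : ℤ)
    (hdisc : P ^ 2 - Δ = 4 * Q * c) (hbez : u₁ * Q + v₁ * P = 1)
    (S : ℕ → ℤ) (hS1 : S 1 = 0)
    (hSrec : ∀ n : ℕ, 1 ≤ n → S (n + 1) = c * v₁ + Q * u₁ * S n + Q * v₁ * (S n) ^ 2) :
    S 2 = c * v₁ ∧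
      (Ideal.span {(Q : AdjoinRoot (X ^ 2 - C P * X + C (Q * c) : ℤ[X])),
          AdjoinRoot.root (X ^ 2 - C P * X + C (Q * c) : ℤ[X])}) ^ 2
        = Ideal.span {((Q ^ 2 : ℤ) : AdjoinRoot (X ^ 2 - C P * X + C (Q * c) : ℤ[X])),
            AdjoinRoot.root (X ^ 2 - C P * X + C (Q * c) : ℤ[X]) -
              ((Q * c * v₁ : ℤ) : AdjoinRoot (X ^ 2 - C P * X + C (Q * c) : ℤ[X]))} := by
  constructor
  · have := hSrec 1 le_rfl
    rw [hS1] at this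
    simpa using this
  set f : ℤ[X] := X ^ 2 - C P * X + C (Q * c) with hf
  set O := AdjoinRoot f
  set τ : O := AdjoinRoot.root f with hτ
  have hof : ∀ n : ℤ, AdjoinRoot.of f n = (n : O) := fun n => by
    rw [show (AdjoinRoot.of f : ℤ →+* O) = Int.castRingHom O from
      RingHom.ext_int _ _]; rfl
  have key : τ * τ = (P : O) * τ - (Q : O) * (c : O) := by
    have h0 := AdjoinRoot.eval₂_root f
    rw [hf] at h0
    simp only [eval₂_add, eval₂_sub, eval₂_mul, eval₂_pow, eval₂_X, eval₂_C, hof] at h0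
    push_cast at h0
    rw [← hf, hof, hof, Int.cast_mul] at h0
    linear_combination h0
  have hb : (u₁ : O) * (Q : O) + (v₁ : O) * (P : O) = 1 := by
    have : ((u₁ * Q + v₁ * P : ℤ) : O) = ((1 : ℤ) : O) := by rw [hbez]
    push_cast at this; rw [Int.cast_mul, Int.cast_mul] at this; exact this
  set t : O := τ - ((Q * c * v₁ : ℤ) : O) with hts
  have hQ2cast : ((Q ^ 2 : ℤ) : O) = (Q : O) * (Q : O) := by push_cast; ring
  have hcast : ((Q * c * v₁ : ℤ) : O) = (Q : O) * (c : O) * (v₁ : O) :=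
    (Int.cast_mul _ _).trans (congrArg (· * _) (Int.cast_mul _ _))
  rw [sq, Ideal.span_pair_mul_span_pair]
  apply le_antisymm
  · rw [Ideal.span_le]
    intro x hx
    simp only [Set.mem_insert_iff, Set.mem_singleton_iff] at hx
    have hQ2 : ((Q ^ 2 : ℤ) : O) ∈ Ideal.span {((Q ^ 2 : ℤ) : O), t} :=
      Ideal.subset_span (by left; rfl)
    have ht : t ∈ Ideal.span {((Q ^ 2 : ℤ) : O), t} :=
      Ideal.subset_span (by right; rfl)
    have hQτ : (Q : O) * τ ∈ Ideal.span {((Q ^ 2 : ℤ) : O), t} := by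
      have he : (Q : O) * τ = (Q : O) * t + ((c : O) * (v₁ : O)) * ((Q ^ 2 : ℤ) : O) := by
        rw [hts]; push_cast; erw [Int.cast_mul, Int.cast_mul]; ring
      rw [he]
      exact add_mem (Ideal.mul_mem_left _ _ ht) (Ideal.mul_mem_left _ _ hQ2)
    have hττ : τ * τ ∈ Ideal.span {((Q ^ 2 : ℤ) : O), t} := by
      have he : τ * τ = (P : O) * t + (-(u₁ : O) * (c : O)) * ((Q ^ 2 : ℤ) : O) := by
        rw [hts]; push_cast; rw [hcast]
        linear_combination key + (Q : O) * (c : O) * hb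
      rw [he]
      exact add_mem (Ideal.mul_mem_left _ _ ht) (Ideal.mul_mem_left _ _ hQ2)
    rcases hx with rfl | rfl | rfl | rfl
    · rw [← hQ2cast]; exact hQ2
    · exact hQτ
    · rw [mul_comm]; exact hQτ
    · exact hττ
  · rw [Ideal.span_le]
    intro x hx
    simp only [Set.mem_insert_iff, Set.mem_singleton_iff] at hx
    have hQQ : (Q : O) * (Q : O) ∈
        Ideal.span {(Q : O) * (Q : O), (Q : O) * τ, τ * (Q : O), τ * τ} :=
      Ideal.subset_span (by simp)
    have hQτ : (Q : O) * τ ∈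
        Ideal.span {(Q : O) * (Q : O), (Q : O) * τ, τ * (Q : O), τ * τ} :=
      Ideal.subset_span (by simp)
    have hττ : τ * τ ∈
        Ideal.span {(Q : O) * (Q : O), (Q : O) * τ, τ * (Q : O), τ * τ} :=
      Ideal.subset_span (by simp)
    rcases hx with rfl | rfl
    · rw [hQ2cast]; exact hQQ
    · have he : t = (u₁ : O) * ((Q : O) * τ) + (v₁ : O) * (τ * τ) := by
        rw [hts]; push_cast; rw [hcast]
        linear_combination -τ * hb - (v₁ : O) * key
      rw [he]
      exact add_mem (Ideal.mul_mem_left _ _ hQτ) (Ideal.mul_mem_left _ _ hττ)
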